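/- Let g/b and ḡ/b̄ be functions on ℤ² such that (g/b)₁₂ (ḡ/b̄)₁ = (ḡ/b̄)₁₂ (g/b)₂ at every lattice point, with all values nonzero. Then there exists a nowhere-zero function τ : ℤ² → ℝ such that g/b = τ₁₂/τ₁ and ḡ/b̄ = τ₁₂/τ₂ at every lattice point. -/

import Mathlib

/-- Discrete exponential: indefinite product of `a` over `ℤ`, normalized to `1` at `0`. -/
noncomputable def dExp (a : ℤ → ℝ) : ℤ → ℝ
  | Int.ofNat n => ∏ i ∈ Finset.range n, a i
  | Int.negSucc n => (∏ i ∈ Finset.range (n + 1), a (Int.negSucc n + i))⁻¹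

lemma dExp_zero (a : ℤ → ℝ) : dExp a 0 = 1 := by
  show dExp a (Int.ofNat 0) = 1
  simp [dExp]

lemma dExp_step (a : ℤ → ℝ) (ha : ∀ n, a n ≠ 0) (n : ℤ) :
    dExp a (n + 1) = a n * dExp a n := by
  cases n with
  | ofNat m =>
      have h : (Int.ofNat m) + 1 = Int.ofNat (m + 1) := rfl
      rw [h]
      show (∏ i ∈ Finset.range (m + 1), a i) = a (Int.ofNat m) * ∏ i ∈ Finset.range m, a i
      rw [Finset.prod_range_succ]
      ring_nf
      norm_cast
  | negSucc m =>
      cases m with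
      | zero =>
          have h : Int.negSucc 0 + 1 = 0 := rfl
          rw [h, dExp_zero]
          show (1 : ℝ) = a (Int.negSucc 0) * (∏ i ∈ Finset.range 1, a (Int.negSucc 0 + i))⁻¹
          simp only [Finset.prod_range_one, add_zero, Nat.cast_zero]
          exact (mul_inv_cancel₀ (ha (Int.negSucc 0))).symm
      | succ m =>
          have h : Int.negSucc (m + 1) + 1 = Int.negSucc m := rfl
          rw [h]
          show (∏ i ∈ Finset.range (m + 1), a (Int.negSucc m + i))⁻¹ =
            a (Int.negSucc (m + 1)) *
              (∏ i ∈ Finset.range (m + 2), a (Int.negSucc (m + 1) + i))⁻¹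
          have hp : (∏ i ∈ Finset.range (m + 2), a (Int.negSucc (m + 1) + i)) =
              a (Int.negSucc (m + 1)) * ∏ i ∈ Finset.range (m + 1), a (Int.negSucc m + i) := by
            rw [Finset.prod_range_succ' (fun i => a (Int.negSucc (m + 1) + i)) (m + 1)]
            have he : ∀ i : ℕ, Int.negSucc (m + 1) + (i + 1 : ℕ) = Int.negSucc m + i := by
              intro i
              simp [Int.negSucc_eq]
              ring
            rw [Finset.prod_congr rfl (fun i _ => by rw [he i])]
            simp [mul_comm]
          rw [hp, mul_inv]
          rw [← mul_assoc, mul_inv_cancel₀ (ha (Int.negSucc (m + 1))), one_mul]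

lemma dExp_ne_zero (a : ℤ → ℝ) (ha : ∀ n, a n ≠ 0) (n : ℤ) : dExp a n ≠ 0 := by
  cases n with
  | ofNat m =>
      show (∏ i ∈ Finset.range m, a i) ≠ 0
      exact Finset.prod_ne_zero_iff.2 fun i _ => ha i
  | negSucc m =>
      show (∏ i ∈ Finset.range (m + 1), a (Int.negSucc m + i))⁻¹ ≠ 0
      exact inv_ne_zero (Finset.prod_ne_zero_iff.2 fun i _ => ha _)

theorem discrete_multiplicative_potential
    (r rb : ℤ × ℤ → ℝ)
    (hr : ∀ m k : ℤ, r (m, k) ≠ 0) (hrb : ∀ m k : ℤ, rb (m, k) ≠ 0)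
    (hcomp : ∀ m k : ℤ,
      r (m + 1, k + 1) * rb (m + 1, k) = rb (m + 1, k + 1) * r (m, k + 1)) :
    ∃ τ : ℤ × ℤ → ℝ, (∀ m k : ℤ, τ (m, k) ≠ 0) ∧
      ∀ m k : ℤ,
        r (m, k) = τ (m + 1, k + 1) / τ (m + 1, k) ∧
        rb (m, k) = τ (m + 1, k + 1) / τ (m, k + 1) := by
  have comp' : ∀ a b : ℤ, r (a, b) * rb (a, b - 1) = rb (a, b) * r (a - 1, b) := by
    intro a b
    have := hcomp (a - 1) (b - 1)
    rw [show a - 1 + 1 = a by ring, show b - 1 + 1 = b by ring] at this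
    exact this
  -- vertical factor
  set A : ℤ → ℝ := dExp (fun j => rb (j, -1)) with hA
  have hAne : ∀ m : ℤ, A m ≠ 0 := dExp_ne_zero _ fun n => hrb n (-1)
  have hAstep : ∀ m : ℤ, A (m + 1) = rb (m, -1) * A m :=
    dExp_step _ (fun n => hrb n (-1))
  set B : ℤ → ℤ → ℝ := fun m => dExp (fun j => r (m - 1, j)) with hB
  have hBne : ∀ m k : ℤ, B m k ≠ 0 := fun m => dExp_ne_zero _ fun j => hr (m - 1) j
  have hBstep : ∀ m k : ℤ, B m (k + 1) = r (m - 1, k) * B m k :=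
    fun m => dExp_step _ fun j => hr (m - 1) j
  have hBstep' : ∀ m k : ℤ, B (m + 1) (k + 1) = r (m, k) * B (m + 1) k := by
    intro m k
    have := hBstep (m + 1) k
    rw [show m + 1 - 1 = m by ring] at this
    exact this
  -- key compatibility lemma
  have key : ∀ m k : ℤ, rb (m, -1) * B (m + 1) k = rb (m, k - 1) * B m k := by
    intro m k
    induction k using Int.induction_on with
    | zero =>
        simp only [hB, dExp_zero]
        norm_num
    | succ i ih =>
        rw [hBstep' m i, hBstep m i]
        have hc := comp' m i
        rw [show (i : ℤ) + 1 - 1 = i by ring]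
        linear_combination r (m, i) * ih + (B m i) * hc
    | pred i ih =>
        set c : ℤ := -(i : ℤ) with hc
        -- goal at c - 1
        apply mul_left_cancel₀ (hr m (c - 1))
        have h1 : B (m + 1) c = r (m, c - 1) * B (m + 1) (c - 1) := by
          have := hBstep' m (c - 1); rw [show c - 1 + 1 = c by ring] at this; exact this
        have h2 : B m c = r (m - 1, c - 1) * B m (c - 1) := by
          have := hBstep m (c - 1); rw [show c - 1 + 1 = c by ring] at this; exact this
        have ih' : rb (m, -1) * (r (m, c - 1) * B (m + 1) (c - 1)) =
            rb (m, c - 1) * (r (m - 1, c - 1) * B m (c - 1)) := by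
          rw [← h1, ← h2]; exact ih
        have hcc := comp' m (c - 1)
        rw [show c - 1 - 1 = c - 1 - 1 by ring]
        linear_combination ih' - (B m (c - 1)) * hcc
  refine ⟨fun p => A p.1 * B p.1 p.2, ?_, ?_⟩
  · intro m k
    exact mul_ne_zero (hAne m) (hBne m k)
  · intro m k
    have hτ1 : A (m + 1) * B (m + 1) (k + 1) = r (m, k) * (A (m + 1) * B (m + 1) k) := by
      rw [hBstep' m k]; ring
    have hτ2 : A (m + 1) * B (m + 1) (k + 1) = rb (m, k) * (A m * B m (k + 1)) := by
      have hk := key m (k + 1)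
      rw [show k + 1 - 1 = k by ring] at hk
      rw [hAstep m]
      calc rb (m, -1) * A m * B (m + 1) (k + 1)
          = A m * (rb (m, -1) * B (m + 1) (k + 1)) := by ring
        _ = A m * (rb (m, k) * B m (k + 1)) := by rw [hk]
        _ = rb (m, k) * (A m * B m (k + 1)) := by ring
    constructor
    · rw [eq_div_iff (mul_ne_zero (hAne (m + 1)) (hBne (m + 1) k))]
      simpa [mul_comm] using hτ1.symm
    · rw [eq_div_iff (mul_ne_zero (hAne m) (hBne m (k + 1)))]
      simpa [mul_comm] using hτ2.symm
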